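/- arXiv:math/0401081 — 2 statements merged into one kernel-verified Lean document; each statement's English description precedes it below -/
import Mathlib

section
/- Let K be a field and let C be a chain complex of K-modules equipped with a decreasing filtration by subcomplexes F^0 C = C ⊇ F^1 C ⊇ F^2 C ⊇ ⋯ which is separated and complete. Suppose the associated graded complex is acyclic, in the elementwise sense that for every n ≥ 0 and every degree i, every x ∈ F^n C_i with d x ∈ F^{n+1} C_{i−1} can be written as x = d y + z with y ∈ F^n C_{i+1} and z ∈ F^{n+1} C_i. Then C itself is acyclic: every x ∈ C_i with d x = 0 equals d y for some y ∈ C_{i+1}. -/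
/-- **Lemma (acyclicity from a complete filtration).**
`K` is a field, `C` is a `ℤ`-indexed chain complex of `K`-modules with
differential `d i : C (i+1) → C i`, equipped with a decreasing filtration
`F : ℕ → Π i, Submodule K (C i)` by subcomplexes with `F 0 = ⊤`, which is
separated and complete.  If the associated graded complex is acyclic
(elementwise), then `C` is acyclic. -/
theorem stmt_0
    (K : Type*) [Field K]
    (C : ℤ → Type*) [∀ i, AddCommGroup (C i)] [∀ i, Module K (C i)]
    (d : ∀ i : ℤ, C (i + 1) →ₗ[K] C i)
    (hdd : ∀ (i : ℤ) (x : C (i + 1 + 1)), d i (d (i + 1) x) = 0)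
    (F : ℕ → ∀ i : ℤ, Submodule K (C i))
    (hF0 : ∀ i : ℤ, F 0 i = ⊤)
    (hFmono : ∀ (n : ℕ) (i : ℤ), F (n + 1) i ≤ F n i)
    (hFd : ∀ (n : ℕ) (i : ℤ) (x : C (i + 1)), x ∈ F n (i + 1) → d i x ∈ F n i)
    (hsep : ∀ (i : ℤ) (x : C i), (∀ n : ℕ, x ∈ F n i) → x = 0)
    (hcompl : ∀ (i : ℤ) (xs : ℕ → C i),
      (∀ n : ℕ, 1 ≤ n → xs n - xs (n - 1) ∈ F n i) →
      ∃ x : C i, ∀ m : ℕ, ∃ N : ℕ, ∀ n : ℕ, N ≤ n → xs n - x ∈ F m i)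
    (hgr : ∀ (n : ℕ) (i : ℤ) (x : C (i + 1)),
      x ∈ F n (i + 1) → d i x ∈ F (n + 1) i →
      ∃ y ∈ F n (i + 1 + 1), ∃ z ∈ F (n + 1) (i + 1), x = d (i + 1) y + z) :
    ∀ (i : ℤ) (x : C (i + 1)), d i x = 0 → ∃ y : C (i + 1 + 1), d (i + 1) y = x := by
  classical
  have hmono : ∀ m n : ℕ, m ≤ n → ∀ j : ℤ, F n j ≤ F m j := by
    intro m n hmn
    induction n with
    | zero => interval_cases m; exact fun j => le_rfl
    | succ n ih =>
      intro j
      rcases Nat.lt_or_ge m (n+1) with h | h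
      · exact le_trans (hFmono n j) (ih (Nat.lt_succ_iff.mp h) j)
      · have : m = n + 1 := le_antisymm hmn h
        subst this; exact le_rfl
  intro i x hx
  have H : ∀ (n : ℕ) (x' : C (i+1)), x' ∈ F n (i+1) → d i x' = 0 →
      ∃ y z, y ∈ F n (i+1+1) ∧ z ∈ F (n+1) (i+1) ∧ x' = d (i+1) y + z ∧ d i z = 0 := by
    intro n x' hx' hdx'
    obtain ⟨y, hy, z, hz, hxyz⟩ := hgr n i x' hx' (by rw [hdx']; exact Submodule.zero_mem _)
    refine ⟨y, z, hy, hz, hxyz, ?_⟩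
    have h2 : d i x' = d i (d (i+1) y) + d i z := by rw [hxyz]; simp
    rw [hdd, hdx'] at h2
    simpa using h2.symm
  let T : ℕ → Type _ := fun n => {x' : C (i+1) // x' ∈ F n (i+1) ∧ d i x' = 0}
  let next : ∀ n, T n → T (n+1) := fun n p =>
    ⟨((H n p.1 p.2.1 p.2.2).choose_spec).choose,
     ((H n p.1 p.2.1 p.2.2).choose_spec).choose_spec.2.1,
     ((H n p.1 p.2.1 p.2.2).choose_spec).choose_spec.2.2.2⟩
  let xs : ∀ n, T n := fun n => Nat.rec ⟨x, (hF0 (i+1)) ▸ Submodule.mem_top, hx⟩ next n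
  let ys : ℕ → C (i+1+1) := fun n => (H n (xs n).1 (xs n).2.1 (xs n).2.2).choose
  have hys : ∀ n, ys n ∈ F n (i+1+1) :=
    fun n => ((H n (xs n).1 (xs n).2.1 (xs n).2.2).choose_spec).choose_spec.1
  have hrel : ∀ n, (xs n).1 = d (i+1) (ys n) + (xs (n+1)).1 :=
    fun n => ((H n (xs n).1 (xs n).2.1 (xs n).2.2).choose_spec).choose_spec.2.2.1
  let Ys : ℕ → C (i+1+1) := fun n => ∑ k ∈ Finset.range (n+1), ys k
  have htel : ∀ n, x - d (i+1) (Ys n) = (xs (n+1)).1 := by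
    intro n
    induction n with
    | zero =>
      show x - d (i+1) (∑ k ∈ Finset.range 1, ys k) = (xs 1).1
      rw [Finset.sum_range_one, sub_eq_iff_eq_add']
      exact hrel 0
    | succ n ih =>
      have hsum : Ys (n+1) = Ys n + ys (n+1) := Finset.sum_range_succ _ _
      rw [hsum, map_add]
      have := hrel (n+1)
      have : (xs (n+2)).1 = (xs (n+1)).1 - d (i+1) (ys (n+1)) := by rw [this]; abel
      rw [this, ← ih]; abel
  obtain ⟨y, hy⟩ := hcompl (i+1+1) Ys (by
    intro n hn
    obtain ⟨k, rfl⟩ := Nat.exists_eq_add_of_le hn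
    have : Ys (1+k) - Ys (1+k-1) = ys (1+k) := by
      have h1 : 1 + k = k + 1 := by omega
      rw [h1]
      simp only [Nat.add_sub_cancel, Ys, Finset.sum_range_succ]
      abel
    rw [this]
    exact hys _)
  refine ⟨y, ?_⟩
  have hzero : x - d (i+1) y = 0 := by
    apply hsep
    intro m
    obtain ⟨N, hN⟩ := hy m
    set n := max N m with hn
    have h1 : Ys n - y ∈ F m (i+1+1) := hN n (le_max_left _ _)
    have h2 : (xs (n+1)).1 ∈ F m (i+1) :=
      hmono m (n+1) (le_trans (le_max_right _ _) (Nat.le_succ n)) _ (xs (n+1)).2.1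
    have heq : x - d (i+1) y = (xs (n+1)).1 + d (i+1) (Ys n - y) := by
      rw [map_sub, ← htel n]; abel
    rw [heq]
    exact Submodule.add_mem _ h2 (hFd m (i+1) _ h1)
  have := sub_eq_zero.mp hzero
  exact this.symm
end

section
/- Let K be a field and let f : C → D be a chain map between chain complexes of K-modules, where C and D are equipped with decreasing filtrations by subcomplexes F^0 C = C ⊇ F^1 C ⊇ ⋯ and F^0 D = D ⊇ F^1 D ⊇ ⋯ which are both separated and complete, and suppose f is filtration-preserving: f(F^n C_i) ⊆ F^n D_i for all n and i. If for every n ≥ 0 the induced map of quotient complexes F^n C / F^{n+1} C → F^n D / F^{n+1} D (with the induced differentials) is a quasi-isomorphism, then f is a quasi-isomorphism, i.e. f induces an isomorphism on homology in every degree. -/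
/-- **Lemma (comparison of filtered complexes).**
`K` is a field; `C`, `D` are `ℤ`-indexed chain complexes of `K`-modules with
differentials `dC i : C (i+1) → C i`, `dD i : D (i+1) → D i`, each equipped
with a decreasing filtration by subcomplexes (`FC 0 = ⊤`, `FD 0 = ⊤`), both
separated and complete.  `f` is a filtration-preserving chain map.  If for
every `n` the induced map of quotient complexes `Fⁿ C / Fⁿ⁺¹ C → Fⁿ D / Fⁿ⁺¹ D`
is a quasi-isomorphism (expressed elementwise: the induced map on homology of
the quotient complexes is surjective and injective in every degree), then `f`
is a quasi-isomorphism (elementwise: `f` induces a surjective and injective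
map on homology in every degree). -/
theorem stmt_2
    (K : Type*) [Field K]
    (C : ℤ → Type*) [∀ i, AddCommGroup (C i)] [∀ i, Module K (C i)]
    (D : ℤ → Type*) [∀ i, AddCommGroup (D i)] [∀ i, Module K (D i)]
    (dC : ∀ i : ℤ, C (i + 1) →ₗ[K] C i)
    (dD : ∀ i : ℤ, D (i + 1) →ₗ[K] D i)
    (hddC : ∀ (i : ℤ) (x : C (i + 1 + 1)), dC i (dC (i + 1) x) = 0)
    (hddD : ∀ (i : ℤ) (x : D (i + 1 + 1)), dD i (dD (i + 1) x) = 0)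
    (f : ∀ i : ℤ, C i →ₗ[K] D i)
    (hf : ∀ (i : ℤ) (x : C (i + 1)), f i (dC i x) = dD i (f (i + 1) x))
    (FC : ℕ → ∀ i : ℤ, Submodule K (C i))
    (FD : ℕ → ∀ i : ℤ, Submodule K (D i))
    (hFC0 : ∀ i : ℤ, FC 0 i = ⊤)
    (hFD0 : ∀ i : ℤ, FD 0 i = ⊤)
    (hFCmono : ∀ (n : ℕ) (i : ℤ), FC (n + 1) i ≤ FC n i)
    (hFDmono : ∀ (n : ℕ) (i : ℤ), FD (n + 1) i ≤ FD n i)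
    (hFCd : ∀ (n : ℕ) (i : ℤ) (x : C (i + 1)), x ∈ FC n (i + 1) → dC i x ∈ FC n i)
    (hFDd : ∀ (n : ℕ) (i : ℤ) (x : D (i + 1)), x ∈ FD n (i + 1) → dD i x ∈ FD n i)
    (hsepC : ∀ (i : ℤ) (x : C i), (∀ n : ℕ, x ∈ FC n i) → x = 0)
    (hsepD : ∀ (i : ℤ) (x : D i), (∀ n : ℕ, x ∈ FD n i) → x = 0)
    (hcomplC : ∀ (i : ℤ) (xs : ℕ → C i),
      (∀ n : ℕ, 1 ≤ n → xs n - xs (n - 1) ∈ FC n i) →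
      ∃ x : C i, ∀ m : ℕ, ∃ N : ℕ, ∀ n : ℕ, N ≤ n → xs n - x ∈ FC m i)
    (hcomplD : ∀ (i : ℤ) (xs : ℕ → D i),
      (∀ n : ℕ, 1 ≤ n → xs n - xs (n - 1) ∈ FD n i) →
      ∃ x : D i, ∀ m : ℕ, ∃ N : ℕ, ∀ n : ℕ, N ≤ n → xs n - x ∈ FD m i)
    (hfF : ∀ (n : ℕ) (i : ℤ) (x : C i), x ∈ FC n i → f i x ∈ FD n i)
    -- surjectivity on homology of the quotient complexes `Fⁿ/Fⁿ⁺¹` in every degree: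
    (hgrSurj : ∀ (n : ℕ) (i : ℤ) (x : D (i + 1)),
      x ∈ FD n (i + 1) → dD i x ∈ FD (n + 1) i →
      ∃ a ∈ FC n (i + 1), dC i a ∈ FC (n + 1) i ∧
        ∃ y ∈ FD n (i + 1 + 1), ∃ z ∈ FD (n + 1) (i + 1),
          x - f (i + 1) a = dD (i + 1) y + z)
    -- injectivity on homology of the quotient complexes `Fⁿ/Fⁿ⁺¹` in every degree:
    (hgrInj : ∀ (n : ℕ) (i : ℤ) (a : C (i + 1)),
      a ∈ FC n (i + 1) → dC i a ∈ FC (n + 1) i →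
      (∃ y ∈ FD n (i + 1 + 1), ∃ z ∈ FD (n + 1) (i + 1),
        f (i + 1) a = dD (i + 1) y + z) →
      ∃ b ∈ FC n (i + 1 + 1), ∃ c ∈ FC (n + 1) (i + 1), a = dC (i + 1) b + c) :
    -- `f` induces an isomorphism on homology in every degree:
    (∀ (i : ℤ) (x : D (i + 1)), dD i x = 0 →
      ∃ a : C (i + 1), dC i a = 0 ∧ ∃ y : D (i + 1 + 1),
        x - f (i + 1) a = dD (i + 1) y) ∧
    (∀ (i : ℤ) (a : C (i + 1)), dC i a = 0 →
      (∃ y : D (i + 1 + 1), f (i + 1) a = dD (i + 1) y) →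
      ∃ b : C (i + 1 + 1), a = dC (i + 1) b) := by

  -- antitonicity of the filtrations
  have hCanti : ∀ (m k : ℕ), m ≤ k → ∀ (i : ℤ), FC k i ≤ FC m i := by
    intro m k h i
    induction h with
    | refl => exact le_rfl
    | step h ih => exact le_trans (hFCmono _ i) ih
  have hDanti : ∀ (m k : ℕ), m ≤ k → ∀ (i : ℤ), FD k i ≤ FD m i := by
    intro m k h i
    induction h with
    | refl => exact le_rfl
    | step h ih => exact le_trans (hFDmono _ i) ih
  -- Key lemma: acyclicity of the mapping cone
  have key : ∀ (j : ℤ) (x : D (j+1+1)) (a : C (j+1)),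
      dD (j+1) x = f (j+1) a → dC j a = 0 →
      ∃ b : C (j+1+1), a = dC (j+1) b ∧
        ∃ y : D (j+1+1+1), x - f (j+1+1) b = dD (j+1+1) y := by
    intro j x a hxa hca
    let P : ℕ → (D (j+1+1+1) × C (j+1+1) × D (j+1+1) × C (j+1)) → Prop := fun n p =>
      p.2.2.1 ∈ FD n (j+1+1) ∧ p.2.2.2 ∈ FC n (j+1) ∧
      dD (j+1) p.2.2.1 = f (j+1) p.2.2.2 ∧ dC j p.2.2.2 = 0 ∧
      x = dD (j+1+1) p.1 + f (j+1+1) p.2.1 + p.2.2.1 ∧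
      a = dC (j+1) p.2.1 + p.2.2.2
    have step : ∀ (n : ℕ) (p : D (j+1+1+1) × C (j+1+1) × D (j+1+1) × C (j+1)),
        P n p → ∃ q, P (n+1) q ∧ q.1 - p.1 ∈ FD n (j+1+1+1) ∧
          q.2.1 - p.2.1 ∈ FC n (j+1+1) := by
      rintro n ⟨Y, B, xn, an⟩ ⟨hx, ha, hd, hc, he1, he2⟩
      obtain ⟨b', hb', c', hc', heq⟩ :=
        hgrInj n j an ha (by rw [hc]; exact Submodule.zero_mem _)
          ⟨xn, hx, 0, Submodule.zero_mem _, by simp [hd]⟩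
      have hu : dD (j+1) (xn - f (j+1+1) b') = f (j+1) c' := by
        have h1 : f (j+1) c' = f (j+1) an - f (j+1) (dC (j+1) b') := by
          rw [heq, map_add]; abel
        rw [h1, map_sub, hd, hf (j+1) b']
      obtain ⟨α, hα, hdα, y', hy', z, hz, heq2⟩ :=
        hgrSurj n (j+1) (xn - f (j+1+1) b')
          (Submodule.sub_mem _ hx (hfF n _ _ hb'))
          (by rw [hu]; exact hfF (n+1) _ _ hc')
      refine ⟨⟨Y + y', B + (b' + α), z, c' - dC (j+1) α⟩,
        ⟨hz, Submodule.sub_mem _ hc' hdα, ?_, ?_, ?_, ?_⟩,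
        by simpa using hy', by simpa using Submodule.add_mem _ hb' hα⟩
      · -- dD z = f (c' - dC α)
        have hz' : z = xn - f (j+1+1) b' - f (j+1+1) α - dD (j+1+1) y' := by
          rw [heq2]; abel
        rw [hz']
        simp only [map_sub, hd, hddD (j+1) y', sub_zero]
        rw [← hf (j+1) b', ← hf (j+1) α]
        rw [heq]
        simp only [map_add, map_sub]
        abel
      · -- dC j (c' - dC α) = 0
        have hc'' : c' = an - dC (j+1) b' := by rw [heq]; abel
        rw [map_sub, hddC j α, sub_zero, hc'', map_sub, hc, hddC j b', sub_self]
      · -- x = dD (Y + y') + f (B + (b' + α)) + z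
        have hxn : xn = dD (j+1+1) y' + z + f (j+1+1) b' + f (j+1+1) α := by
          rw [← heq2]; abel
        rw [he1, hxn]
        simp only [map_add]
        abel
      · -- a = dC (B + (b' + α)) + (c' - dC α)
        rw [he2, heq]
        simp only [map_add]
        abel
    choose nxt hnxt using step
    have base : P 0 ⟨0, 0, x, a⟩ := by
      refine ⟨by rw [hFD0]; trivial, by rw [hFC0]; trivial, hxa, hca, by simp, by simp⟩
    let seq : ∀ n : ℕ, {p // P n p} := fun n =>
      Nat.rec (motive := fun n => {p // P n p}) ⟨⟨0, 0, x, a⟩, base⟩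
        (fun k ih => ⟨nxt k ih.1 ih.2, (hnxt k ih.1 ih.2).1⟩) n
    have hP : ∀ n, P n (seq n).1 := fun n => (seq n).2
    have hYinc : ∀ n, (seq (n+1)).1.1 - (seq n).1.1 ∈ FD n (j+1+1+1) :=
      fun n => (hnxt n (seq n).1 (seq n).2).2.1
    have hBinc : ∀ n, (seq (n+1)).1.2.1 - (seq n).1.2.1 ∈ FC n (j+1+1) :=
      fun n => (hnxt n (seq n).1 (seq n).2).2.2
    obtain ⟨b, hb⟩ := hcomplC (j+1+1) (fun n => (seq (n+1)).1.2.1) (by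
      intro n hn
      obtain ⟨k, rfl⟩ : ∃ k, n = k + 1 := ⟨n - 1, by omega⟩
      simpa using hBinc (k+1))
    obtain ⟨yy, hyy⟩ := hcomplD (j+1+1+1) (fun n => (seq (n+1)).1.1) (by
      intro n hn
      obtain ⟨k, rfl⟩ : ∃ k, n = k + 1 := ⟨n - 1, by omega⟩
      simpa using hYinc (k+1))
    refine ⟨b, ?_, yy, ?_⟩
    · have hall : ∀ m : ℕ, a - dC (j+1) b ∈ FC m (j+1) := by
        intro m
        obtain ⟨N, hN⟩ := hb m
        obtain ⟨_, ha', _, _, _, he2⟩ := hP (max N m + 1)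
        have hrw : a - dC (j+1) b =
            dC (j+1) ((seq (max N m + 1)).1.2.1 - b) + (seq (max N m + 1)).1.2.2.2 := by
          rw [map_sub, he2]; abel
        rw [hrw]
        exact Submodule.add_mem _ (hFCd m (j+1) _ (hN _ (le_max_left _ _)))
          (hCanti m (max N m + 1) (by omega) _ ha')
      exact sub_eq_zero.mp (hsepC (j+1) _ hall)
    · have hall : ∀ m : ℕ, x - f (j+1+1) b - dD (j+1+1) yy ∈ FD m (j+1+1) := by
        intro m
        obtain ⟨N1, hN1⟩ := hb m
        obtain ⟨N2, hN2⟩ := hyy m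
        set n := max (max N1 N2) m with hn
        obtain ⟨hx', _, _, _, he1, _⟩ := hP (n + 1)
        have hrw : x - f (j+1+1) b - dD (j+1+1) yy =
            dD (j+1+1) ((seq (n+1)).1.1 - yy) + f (j+1+1) ((seq (n+1)).1.2.1 - b)
              + (seq (n+1)).1.2.2.1 := by
          rw [map_sub, map_sub, he1]; abel
        rw [hrw]
        refine Submodule.add_mem _ (Submodule.add_mem _ ?_ ?_) ?_
        · exact hFDd m (j+1+1) _ (hN2 n (by omega))
        · exact hfF m _ _ (hN1 n (by omega))
        · exact hDanti m (n+1) (by omega) _ hx'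
      exact sub_eq_zero.mp (hsepD (j+1+1) _ hall)
  constructor
  · intro i x hx
    obtain ⟨j, rfl⟩ : ∃ j : ℤ, i = j + 1 := ⟨i - 1, by omega⟩
    obtain ⟨b, hb, y, hy⟩ := key j x 0 (by simp [hx]) (by simp)
    exact ⟨b, hb.symm, y, hy⟩
  · rintro i a ha ⟨y, hy⟩
    obtain ⟨b, hb, -⟩ := key i y a hy.symm ha
    exact ⟨b, hb⟩
end
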